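/- Let A_n ~ SBM(n, L, p, f(n)Q) where f(n) = Ω(1/n²), f(n) = o(1), Q is a symmetric matrix with constant positive entries, and p has constant positive entries with L constant. Then H(A_n) = binom(n,2)·f(n)·log(1/f(n))·(p^T Q p + o(1)) as n → ∞. -/

import Mathlib

/-- The pmf of the adjacency matrix of `SBM(n, L, p, W)`. -/
noncomputable def sbmProb (n L : ℕ) (p : Fin L → ℝ) (W : Fin L → Fin L → ℝ)
    (a : Fin n → Fin n → Bool) : ℝ :=
  if (∀ i, a i i = false) ∧ (∀ i j, a i j = a j i) then
    ∑ x : Fin n → Fin L, (∏ i, p (x i)) *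
      ∏ i : Fin n, ∏ j : Fin n,
        if i < j then (if a i j then W (x i) (x j) else 1 - W (x i) (x j)) else 1
  else 0

/-- Shannon entropy (in bits) of a pmf on a finite type. -/
noncomputable def entropy {α : Type*} [Fintype α] (P : α → ℝ) : ℝ :=
  -∑ a, P a * Real.logb 2 (P a)

namespace SBMAux
open Finset


variable {n : ℕ}

def T (n : ℕ) : Finset (Fin n × Fin n) := Finset.univ.filter fun q => q.1 < q.2

lemma mem_T {q : Fin n × Fin n} : q ∈ T n ↔ q.1 < q.2 := by simp [T]

lemma prod_ite_lt (h : Fin n → Fin n → ℝ) :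
    (∏ i, ∏ j, if i < j then h i j else 1) = ∏ q ∈ T n, h q.1 q.2 := by
  rw [T, Finset.prod_filter, ← Fintype.prod_prod_type']

def Sym (a : Fin n → Fin n → Bool) : Prop :=
  (∀ i, a i i = false) ∧ (∀ i j, a i j = a j i)

instance : DecidablePred (Sym (n := n)) := fun a => by unfold Sym; infer_instance

def toSym (b : {q : Fin n × Fin n // q.1 < q.2} → Bool) : Fin n → Fin n → Bool := fun i j =>
  if h : i < j then b ⟨(i, j), h⟩ else if h : j < i then b ⟨(j, i), h⟩ else false

lemma toSym_sym (b : {q : Fin n × Fin n // q.1 < q.2} → Bool) : Sym (toSym b) := by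
  constructor
  · intro i; simp [toSym]
  · intro i j
    rcases lt_trichotomy i j with h | h | h
    · simp [toSym, h, not_lt.2 h.le]
    · simp [toSym, h]
    · simp [toSym, h, not_lt.2 h.le]

lemma prod_T_eq (h : Fin n × Fin n → ℝ) :
    ∏ q ∈ T n, h q = ∏ q : {q : Fin n × Fin n // q.1 < q.2}, h q.1 :=
  Finset.prod_subtype (T n) (fun _ => mem_T) h

lemma key (g : Fin n → Fin n → Bool → ℝ) :
    (∑ a : Fin n → Fin n → Bool,
      if Sym a then ∏ q ∈ T n, g q.1 q.2 (a q.1 q.2) else 0)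
    = ∏ q ∈ T n, (g q.1 q.2 true + g q.1 q.2 false) := by
  classical
  rw [← Finset.sum_filter]
  have h1 : ∑ a ∈ Finset.univ.filter Sym, ∏ q ∈ T n, g q.1 q.2 (a q.1 q.2)
      = ∑ b : {q : Fin n × Fin n // q.1 < q.2} → Bool,
          ∏ q : {q : Fin n × Fin n // q.1 < q.2}, g q.1.1 q.1.2 (b q) := by
    refine Finset.sum_bij' (fun (a : Fin n → Fin n → Bool) _ => fun q => a q.1.1 q.1.2)
      (fun b _ => toSym b) (fun a ha => Finset.mem_univ _)
      (fun b hb => by simpa using toSym_sym b) ?_ ?_ ?_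
    · intro a ha
      funext i j
      rcases (Finset.mem_filter.1 ha).2 with ⟨hd, hs⟩
      rcases lt_trichotomy i j with h | h | h
      · simp [toSym, h]
      · subst h; simp [toSym, hd i]
      · simp [toSym, h, not_lt.2 h.le, hs i j]
    · intro b hb
      funext q
      simp [toSym, q.2]
    · intro a ha
      exact prod_T_eq _
  rw [h1, prod_T_eq fun q => g q.1 q.2 true + g q.1 q.2 false]
  rw [← Fintype.prod_sum]
  refine Finset.prod_congr rfl fun q _ => ?_
  exact Fintype.sum_bool _


lemma card_T : (T n).card = n.choose 2 := by
  rw [T, Finset.card_filter, Fintype.sum_prod_type]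
  have h1 : ∀ i : Fin n, (∑ j : Fin n, if i < j then 1 else 0) = n - 1 - (i : ℕ) := by
    intro i
    rw [← Finset.card_filter]
    have : Finset.univ.filter (fun j => i < j) = Finset.Ioi i := by
      ext j; simp
    rw [this, Fin.card_Ioi]
  rw [Finset.sum_congr rfl fun i _ => h1 i, Fin.sum_univ_eq_sum_range (fun k => n - 1 - k)]
  have := Finset.sum_range_reflect (fun j => j) n
  rw [this, Nat.choose_two_right, Finset.sum_range_id]




lemma prod_split (c : Fin n → ℝ) (i0 j0 : Fin n) (hij : i0 ≠ j0) :
    ∏ i, c i = c i0 * (c j0 * ∏ i ∈ (Finset.univ.erase i0).erase j0, c i) := by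
  rw [← Finset.mul_prod_erase Finset.univ c (Finset.mem_univ i0),
    ← Finset.mul_prod_erase _ c (Finset.mem_erase.2 ⟨hij.symm, Finset.mem_univ j0⟩)]

lemma prod_two (c : Fin n → ℝ) (i0 j0 : Fin n) (hij : i0 ≠ j0)
    (hc : ∀ i, i ≠ i0 → i ≠ j0 → c i = 1) : ∏ i, c i = c i0 * c j0 := by
  rw [prod_split c i0 j0 hij]
  rw [Finset.prod_eq_one fun i hi => hc i (Finset.mem_erase.1 (Finset.mem_erase.1 hi).2).1
    (Finset.mem_erase.1 hi).1]
  ring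

lemma sum_two_coord {L : ℕ} (p : Fin L → ℝ) (hp1 : ∑ i, p i = 1)
    (i0 j0 : Fin n) (hij : i0 ≠ j0) (F : Fin L → Fin L → ℝ) :
    ∑ x : Fin n → Fin L, (∏ i, p (x i)) * F (x i0) (x j0)
      = ∑ u, ∑ v, p u * p v * F u v := by
  classical
  set g : Fin L → Fin L → Fin n → Fin L → ℝ := fun u v i t =>
    if i = i0 then (if t = u then F u v * p t else 0)
    else if i = j0 then (if t = v then p t else 0) else p t with hg
  have stepB : ∀ x : Fin n → Fin L,
      (∏ i, p (x i)) * F (x i0) (x j0) = ∑ u, ∑ v, ∏ i, g u v i (x i) := by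
    intro x
    have hsplit : ∀ u v, ∏ i, g u v i (x i)
        = (if x i0 = u then F u v * p (x i0) else 0) *
          ((if x j0 = v then p (x j0) else 0) *
            ∏ i ∈ (Finset.univ.erase i0).erase j0, p (x i)) := by
      intro u v
      have hA : g u v i0 (x i0) = (if x i0 = u then F u v * p (x i0) else 0) := by
        simp [hg]
      have hB : g u v j0 (x j0) = (if x j0 = v then p (x j0) else 0) := by
        simp [hg, hij.symm]
      have hC : ∏ i ∈ (Finset.univ.erase i0).erase j0, g u v i (x i)
          = ∏ i ∈ (Finset.univ.erase i0).erase j0, p (x i) := by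
        refine Finset.prod_congr rfl fun i hi => ?_
        have h1 := (Finset.mem_erase.1 hi).1
        have h2 := (Finset.mem_erase.1 (Finset.mem_erase.1 hi).2).1
        simp [hg, h1, h2]
      rw [prod_split (fun i => g u v i (x i)) i0 j0 hij, hA, hB, hC]
    simp only [hsplit]
    simp [Finset.sum_ite_eq, ite_mul, zero_mul, ← Finset.sum_mul]
    rw [prod_split (fun i => p (x i)) i0 j0 hij]
    ring
  simp only [stepB]
  rw [Finset.sum_comm]
  have : ∀ u, ∑ x : Fin n → Fin L, ∑ v, ∏ i, g u v i (x i)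
      = ∑ v, ∑ x : Fin n → Fin L, ∏ i, g u v i (x i) := fun u => Finset.sum_comm
  simp only [this]
  refine Finset.sum_congr rfl fun u _ => Finset.sum_congr rfl fun v _ => ?_
  rw [← Fintype.prod_sum]
  rw [prod_two (fun i => ∑ t, g u v i t) i0 j0 hij]
  · simp only [hg, if_pos rfl, if_neg hij.symm]
    simp [Finset.sum_ite_eq', hij.symm]
    ring
  · intro i h1 h2
    simp only [hg, if_neg h1, if_neg h2]
    exact hp1



lemma gibbs {α : Type*} [Fintype α] (P Q : α → ℝ)
    (hP : ∀ a, 0 ≤ P a) (hQ : ∀ a, 0 ≤ Q a)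
    (hPQ : ∀ a, P a ≠ 0 → Q a ≠ 0)
    (hP1 : ∑ a, P a = 1) (hQ1 : ∑ a, Q a ≤ 1) :
    -∑ a, P a * Real.logb 2 (P a) ≤ -∑ a, P a * Real.logb 2 (Q a) := by
  rw [neg_le_neg_iff]
  have key : ∑ a, P a * (Real.log (Q a) - Real.log (P a)) ≤ 0 := by
    have hterm : ∀ a, P a * (Real.log (Q a) - Real.log (P a)) ≤ Q a - P a := by
      intro a
      rcases eq_or_lt_of_le (hP a) with h | h
      · simp [← h]; exact hQ a
      · have hQa : 0 < Q a := lt_of_le_of_ne (hQ a) (Ne.symm (hPQ a (ne_of_gt h)))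
        have : Real.log (Q a) - Real.log (P a) = Real.log (Q a / P a) := by
          rw [Real.log_div (ne_of_gt hQa) (ne_of_gt h)]
        rw [this]
        have hlog := Real.log_le_sub_one_of_pos (div_pos hQa h)
        calc P a * Real.log (Q a / P a) ≤ P a * (Q a / P a - 1) := by
              exact mul_le_mul_of_nonneg_left hlog (le_of_lt h)
          _ = Q a - P a := by field_simp
    calc ∑ a, P a * (Real.log (Q a) - Real.log (P a)) ≤ ∑ a, (Q a - P a) :=
          Finset.sum_le_sum fun a _ => hterm a
      _ = (∑ a, Q a) - 1 := by rw [Finset.sum_sub_distrib, hP1]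
      _ ≤ 0 := by linarith
  have h2 : (0:ℝ) < Real.log 2 := Real.log_pos one_lt_two
  simp only [Real.logb]
  rw [← sub_nonpos]
  have : (∑ a, P a * (Real.log (Q a) / Real.log 2)) - ∑ a, P a * (Real.log (P a) / Real.log 2)
      = (∑ a, P a * (Real.log (Q a) - Real.log (P a))) / Real.log 2 := by
    rw [Finset.sum_div, ← Finset.sum_sub_distrib]
    refine Finset.sum_congr rfl fun a _ => by ring
  rw [this]
  exact div_nonpos_of_nonpos_of_nonneg key h2.le

lemma prod_ite_count {n : ℕ} (s : Finset (Fin n × Fin n)) (b : Fin n × Fin n → Prop)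
    [DecidablePred b] (x y : ℝ) :
    ∏ q ∈ s, (if b q then x else y)
      = x ^ (s.filter b).card * y ^ (s.filter fun q => ¬ b q).card := by
  rw [Finset.prod_ite, Finset.prod_const, Finset.prod_const]


section core

variable {L : ℕ} (p : Fin L → ℝ) (W : Fin L → Fin L → ℝ)

lemma sbmProb_eq (a : Fin n → Fin n → Bool) :
    sbmProb n L p W a = if Sym a then
      ∑ x : Fin n → Fin L, (∏ i, p (x i)) *
        ∏ q ∈ T n, (if a q.1 q.2 then W (x q.1) (x q.2) else 1 - W (x q.1) (x q.2))
    else 0 := by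
  by_cases h : Sym a
  · rw [sbmProb, if_pos ⟨h.1, h.2⟩, if_pos h]
    refine Finset.sum_congr rfl fun x _ => ?_
    rw [prod_ite_lt fun i j => if a i j then W (x i) (x j) else 1 - W (x i) (x j)]
  · rw [sbmProb, if_neg (fun hc => h ⟨hc.1, hc.2⟩), if_neg h]

variable (hp : ∀ i, 0 ≤ p i) (hp1 : ∑ i, p i = 1)
  (hW0 : ∀ i j, 0 ≤ W i j) (hW1 : ∀ i j, W i j ≤ 1)

include hp hW0 hW1 in
lemma P_nonneg (a : Fin n → Fin n → Bool) : 0 ≤ sbmProb n L p W a := by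
  rw [sbmProb_eq]
  split_ifs
  · refine Finset.sum_nonneg fun x _ => mul_nonneg (Finset.prod_nonneg fun i _ => hp _)
      (Finset.prod_nonneg fun q _ => ?_)
    split_ifs
    · exact hW0 _ _
    · linarith [hW1 (x q.1) (x q.2)]
  · exact le_refl 0

include hp1 in
lemma sum_pi_p : ∑ x : Fin n → Fin L, ∏ i, p (x i) = 1 := by
  rw [← Fintype.prod_sum]
  simp [hp1]

include hp1 in
lemma P_sum_one : ∑ a : Fin n → Fin n → Bool, sbmProb n L p W a = 1 := by
  simp only [sbmProb_eq]
  have swap : ∀ a : Fin n → Fin n → Bool,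
      (if Sym a then ∑ x : Fin n → Fin L, (∏ i, p (x i)) *
        ∏ q ∈ T n, (if a q.1 q.2 then W (x q.1) (x q.2) else 1 - W (x q.1) (x q.2)) else 0)
      = ∑ x : Fin n → Fin L, (∏ i, p (x i)) *
          (if Sym a then ∏ q ∈ T n,
            (if a q.1 q.2 then W (x q.1) (x q.2) else 1 - W (x q.1) (x q.2)) else 0) := by
    intro a; split_ifs <;> simp
  simp only [swap]
  rw [Finset.sum_comm]
  have inner : ∀ x : Fin n → Fin L,
      (∑ a : Fin n → Fin n → Bool, (∏ i, p (x i)) *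
        (if Sym a then ∏ q ∈ T n,
          (if a q.1 q.2 then W (x q.1) (x q.2) else 1 - W (x q.1) (x q.2)) else 0))
      = ∏ i, p (x i) := by
    intro x
    rw [← Finset.mul_sum, key fun i j v => if v then W (x i) (x j) else 1 - W (x i) (x j)]
    simp
  simp only [inner]
  exact sum_pi_p p hp1

include hp1 in
lemma P_marginal (q0 : Fin n × Fin n) (hq0 : q0 ∈ T n) :
    ∑ a : Fin n → Fin n → Bool,
      sbmProb n L p W a * (if a q0.1 q0.2 then (1:ℝ) else 0)
    = ∑ u, ∑ v, p u * p v * W u v := by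
  simp only [sbmProb_eq]
  have swap : ∀ a : Fin n → Fin n → Bool,
      (if Sym a then ∑ x : Fin n → Fin L, (∏ i, p (x i)) *
        ∏ q ∈ T n, (if a q.1 q.2 then W (x q.1) (x q.2) else 1 - W (x q.1) (x q.2)) else 0)
        * (if a q0.1 q0.2 then (1:ℝ) else 0)
      = ∑ x : Fin n → Fin L, (∏ i, p (x i)) *
          (if Sym a then ∏ q ∈ T n,
            ((if a q.1 q.2 then W (x q.1) (x q.2) else 1 - W (x q.1) (x q.2)) *
              (if q = q0 then (if a q.1 q.2 then (1:ℝ) else 0) else 1)) else 0) := by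
    intro a
    by_cases h : Sym a
    · simp only [if_pos h]
      rw [Finset.sum_mul]
      refine Finset.sum_congr rfl fun x _ => ?_
      rw [Finset.prod_mul_distrib, Finset.prod_ite_eq' (T n) q0
        (fun q => if a q.1 q.2 then (1:ℝ) else 0), if_pos hq0]
      ring
    · simp only [if_neg h]; simp
  simp only [swap]
  rw [Finset.sum_comm]
  have inner : ∀ x : Fin n → Fin L,
      (∑ a : Fin n → Fin n → Bool, (∏ i, p (x i)) *
        (if Sym a then ∏ q ∈ T n,
          ((if a q.1 q.2 then W (x q.1) (x q.2) else 1 - W (x q.1) (x q.2)) *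
            (if q = q0 then (if a q.1 q.2 then (1:ℝ) else 0) else 1)) else 0))
      = (∏ i, p (x i)) * W (x q0.1) (x q0.2) := by
    intro x
    rw [← Finset.mul_sum, key fun i j v =>
      (if v then W (x i) (x j) else 1 - W (x i) (x j)) *
        (if (i, j) = q0 then (if v then (1:ℝ) else 0) else 1)]
    congr 1
    have hprod : ∀ q ∈ T n,
        ((if (true : Bool) = true then W (x q.1) (x q.2) else 1 - W (x q.1) (x q.2)) *
          (if (q.1, q.2) = q0 then (if (true : Bool) = true then (1:ℝ) else 0) else 1) +
         (if (false : Bool) = true then W (x q.1) (x q.2) else 1 - W (x q.1) (x q.2)) *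
          (if (q.1, q.2) = q0 then (if (false : Bool) = true then (1:ℝ) else 0) else 1))
        = (if q = q0 then W (x q.1) (x q.2) else 1) := by
      intro q _
      by_cases h : q = q0
      · subst h; simp
      · have h2 : (q.1, q.2) ≠ q0 := by simpa using h
        simp [h, h2]
    rw [Finset.prod_congr rfl hprod, Finset.prod_ite_eq' (T n) q0
      (fun q => W (x q.1) (x q.2)), if_pos hq0]
  simp only [inner]
  exact sum_two_coord p hp1 q0.1 q0.2 (ne_of_lt (mem_T.1 hq0)) W

def eC {n : ℕ} (a : Fin n → Fin n → Bool) : ℕ := ((T n).filter fun q => a q.1 q.2 = true).card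

lemma eC_le {n : ℕ} (a : Fin n → Fin n → Bool) : eC a ≤ n.choose 2 := by
  rw [← card_T]; exact Finset.card_filter_le _ _

lemma eC_sum {n : ℕ} (a : Fin n → Fin n → Bool) :
    (eC a : ℝ) = ∑ q ∈ T n, (if a q.1 q.2 then (1:ℝ) else 0) := by
  rw [eC, Finset.card_filter]
  push_cast
  rfl

include hp1 in
lemma P_expected_edges :
    ∑ a : Fin n → Fin n → Bool, sbmProb n L p W a * (eC a : ℝ)
      = (n.choose 2 : ℝ) * ∑ u, ∑ v, p u * p v * W u v := by
  have : ∀ a : Fin n → Fin n → Bool, sbmProb n L p W a * (eC a : ℝ)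
      = ∑ q ∈ T n, sbmProb n L p W a * (if a q.1 q.2 then (1:ℝ) else 0) := by
    intro a; rw [eC_sum, Finset.mul_sum]
  simp only [this]
  rw [Finset.sum_comm]
  rw [Finset.sum_congr rfl fun q hq => P_marginal p W hp1 q hq]
  rw [Finset.sum_const, card_T, nsmul_eq_mul]

include hp hp1 hW0 hW1 in
lemma P_le (M : ℝ) (hM : 0 ≤ M) (hWM : ∀ u v, W u v ≤ M) (a : Fin n → Fin n → Bool) :
    sbmProb n L p W a ≤ M ^ eC a := by
  rw [sbmProb_eq]
  split_ifs with h
  · calc ∑ x : Fin n → Fin L, (∏ i, p (x i)) *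
        ∏ q ∈ T n, (if a q.1 q.2 then W (x q.1) (x q.2) else 1 - W (x q.1) (x q.2))
        ≤ ∑ x : Fin n → Fin L, (∏ i, p (x i)) * M ^ eC a := by
          refine Finset.sum_le_sum fun x _ => ?_
          refine mul_le_mul_of_nonneg_left ?_ (Finset.prod_nonneg fun i _ => hp _)
          calc ∏ q ∈ T n, (if a q.1 q.2 then W (x q.1) (x q.2) else 1 - W (x q.1) (x q.2))
              ≤ ∏ q ∈ T n, (if a q.1 q.2 then M else 1) := by
                refine Finset.prod_le_prod (fun q _ => ?_) (fun q _ => ?_)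
                · split_ifs
                  · exact hW0 _ _
                  · linarith [hW1 (x q.1) (x q.2)]
                · split_ifs
                  · exact hWM _ _
                  · linarith [hW0 (x q.1) (x q.2)]
            _ = M ^ eC a := by
                rw [Finset.prod_ite, Finset.prod_const, Finset.prod_const, one_pow, mul_one]
                rfl
      _ = M ^ eC a := by rw [← Finset.sum_mul, sum_pi_p p hp1, one_mul]
  · exact pow_nonneg hM _

include hp hp1 hW0 hW1 in
lemma entropy_lb (M : ℝ) (hM : 0 < M) (hWM : ∀ u v, W u v ≤ M) :
    (∑ a : Fin n → Fin n → Bool, sbmProb n L p W a * (eC a : ℝ)) * Real.logb 2 (1/M)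
      ≤ entropy (sbmProb n L p W) := by
  rw [entropy, Finset.sum_mul, ← Finset.sum_neg_distrib]
  refine Finset.sum_le_sum fun a _ => ?_
  rcases eq_or_lt_of_le (P_nonneg p W hp hW0 hW1 a) with h | h
  · rw [← h]; simp
  · have hle := P_le p W hp hp1 hW0 hW1 M hM.le hWM a
    have hlog : Real.logb 2 (sbmProb n L p W a) ≤ (eC a : ℝ) * Real.logb 2 M := by
      calc Real.logb 2 (sbmProb n L p W a) ≤ Real.logb 2 (M ^ eC a) :=
            Real.logb_le_logb_of_le one_lt_two h hle
        _ = (eC a : ℝ) * Real.logb 2 M := Real.logb_pow _ _ _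
    have h1M : Real.logb 2 (1/M) = -Real.logb 2 M := by
      rw [one_div, Real.logb_inv]
    rw [h1M]
    have := mul_le_mul_of_nonneg_left hlog h.le
    nlinarith
include hp hp1 hW0 hW1 in
lemma entropy_ub (th : ℝ) (hth0 : 0 < th) (hth1 : th < 1) :
    entropy (sbmProb n L p W)
      ≤ (∑ a : Fin n → Fin n → Bool, sbmProb n L p W a * (eC a : ℝ)) * Real.logb 2 (1/th)
        + ((n.choose 2 : ℝ) - ∑ a : Fin n → Fin n → Bool, sbmProb n L p W a * (eC a : ℝ))
          * Real.logb 2 (1/(1-th)) := by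
  classical
  set P := sbmProb n L p W with hP
  set QT : (Fin n → Fin n → Bool) → ℝ := fun a =>
    if Sym a then th ^ eC a * (1-th) ^ (n.choose 2 - eC a) else 0 with hQT
  have h1th : (0:ℝ) < 1 - th := by linarith
  have hQT0 : ∀ a, 0 ≤ QT a := by
    intro a; rw [hQT]; dsimp only
    split_ifs
    · exact mul_nonneg (pow_nonneg hth0.le _) (pow_nonneg h1th.le _)
    · exact le_refl 0
  have hQTsum : ∑ a : Fin n → Fin n → Bool, QT a = 1 := by
    have heq : ∀ a : Fin n → Fin n → Bool, QT a
        = if Sym a then ∏ q ∈ T n, (if a q.1 q.2 then th else 1 - th) else 0 := by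
      intro a; rw [hQT]; dsimp only
      split_ifs with h
      · have hcardneg : ((T n).filter fun q => ¬ a q.1 q.2 = true).card
            = n.choose 2 - eC a := by
          have h2 := Finset.card_filter_add_card_filter_not
            (s := T n) (p := fun q => a q.1 q.2 = true)
          rw [card_T] at h2
          unfold eC
          omega
        rw [Finset.prod_ite, Finset.prod_const, Finset.prod_const, hcardneg]
        rfl
      · rfl
    simp only [heq]
    rw [key fun i j v => if v then th else 1 - th]
    simp
  have hPQ : ∀ a, P a ≠ 0 → QT a ≠ 0 := by
    intro a hPa
    have hSym : Sym a := by
      by_contra h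
      exact hPa (by rw [hP, sbmProb_eq, if_neg h])
    rw [hQT]; dsimp only; rw [if_pos hSym]
    exact ne_of_gt (mul_pos (pow_pos hth0 _) (pow_pos h1th _))
  have hgibbs := gibbs P QT (P_nonneg p W hp hW0 hW1) hQT0 hPQ (P_sum_one p W hp1) hQTsum.le
  rw [entropy]
  refine le_trans hgibbs (le_of_eq ?_)
  have hterm : ∀ a : Fin n → Fin n → Bool, -(P a * Real.logb 2 (QT a))
      = P a * (eC a : ℝ) * Real.logb 2 (1/th)
        + (P a * (n.choose 2 : ℝ) * Real.logb 2 (1/(1-th))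
            - P a * (eC a : ℝ) * Real.logb 2 (1/(1-th))) := by
    intro a
    rcases eq_or_ne (P a) 0 with h | h
    · rw [h]; ring
    · have hSym : Sym a := by
        by_contra hs
        exact h (by rw [hP, sbmProb_eq, if_neg hs])
      rw [hQT]; dsimp only; rw [if_pos hSym]
      rw [Real.logb_mul (by positivity) (by positivity), Real.logb_pow, Real.logb_pow]
      have hcast : ((n.choose 2 - eC a : ℕ) : ℝ) = (n.choose 2 : ℝ) - (eC a : ℝ) := by
        rw [Nat.cast_sub (eC_le a)]
      rw [hcast]
      have h1 : Real.logb 2 (1/th) = -Real.logb 2 th := by rw [one_div, Real.logb_inv]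
      have h2 : Real.logb 2 (1/(1-th)) = -Real.logb 2 (1-th) := by
        rw [one_div, Real.logb_inv]
      rw [h1, h2]; ring
  rw [← Finset.sum_neg_distrib, Finset.sum_congr rfl fun a _ => hterm a]
  rw [Finset.sum_add_distrib, Finset.sum_sub_distrib]
  rw [← Finset.sum_mul, ← Finset.sum_mul, ← Finset.sum_mul]
  rw [P_sum_one p W hp1, one_mul, ← Finset.sum_mul]
  ring


end core
end SBMAux

/-- For `A_n ~ SBM(n, L, p, f(n)Q)` with `f(n) = Ω(1/n²)`, `f(n) = o(1)`,
constant positive symmetric `Q` and constant positive `p`, the entropy satisfies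
`H(A_n) = binom(n,2)·f(n)·log(1/f(n))·(pᵀQp + o(1))`, stated as convergence of the ratio
`H(A_n)/(binom(n,2) f(n) log(1/f(n)))` to `pᵀQp`. -/
theorem sbm_entropy_asymptotics (L : ℕ) (hL : 0 < L)
    (p : Fin L → ℝ) (Q : Fin L → Fin L → ℝ)
    (hp : ∀ i, 0 < p i) (hp1 : ∑ i, p i = 1)
    (hQ : ∀ i j, 0 < Q i j) (hQs : ∀ i j, Q i j = Q j i)
    (f : ℕ → ℝ) (hf0 : ∀ n, 0 < f n) (hfW : ∀ n i j, f n * Q i j ≤ 1)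
    (c : ℝ) (hc : 0 < c)
    (hflb : ∀ᶠ n : ℕ in Filter.atTop, c / (n : ℝ) ^ 2 ≤ f n)
    (hfo : Filter.Tendsto f Filter.atTop (nhds 0)) :
    Filter.Tendsto (fun n =>
        entropy (sbmProb n L p (fun i j => f n * Q i j))
          / ((Nat.choose n 2 : ℝ) * f n * Real.logb 2 (1 / f n)))
      Filter.atTop (nhds (∑ i, ∑ j, p i * p j * Q i j)) := by
  classical
  haveI : Nonempty (Fin L) := ⟨⟨0, hL⟩⟩
  set s : ℝ := ∑ i, ∑ j, p i * p j * Q i j with hs_def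
  have hs_pos : 0 < s := by
    refine Finset.sum_pos (fun i _ => Finset.sum_pos (fun j _ => ?_) Finset.univ_nonempty)
      Finset.univ_nonempty
    exact mul_pos (mul_pos (hp i) (hp j)) (hQ i j)
  obtain ⟨i0⟩ := (inferInstance : Nonempty (Fin L))
  set Qm : ℝ := Finset.univ.sup' Finset.univ_nonempty (fun q : Fin L × Fin L => Q q.1 q.2)
    with hQm_def
  have hQm_le : ∀ i j, Q i j ≤ Qm := fun i j =>
    Finset.le_sup' (fun q : Fin L × Fin L => Q q.1 q.2) (Finset.mem_univ (i, j))
  have hQm_pos : 0 < Qm := lt_of_lt_of_le (hQ i0 i0) (hQm_le i0 i0)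
  have hp' : ∀ i, 0 ≤ p i := fun i => (hp i).le
  have hW0 : ∀ n i j, 0 ≤ f n * Q i j := fun n i j => (mul_pos (hf0 n) (hQ i j)).le
  have hWM : ∀ n u v, f n * Q u v ≤ f n * Qm := fun n u v =>
    mul_le_mul_of_nonneg_left (hQm_le u v) (hf0 n).le
  have hsig : ∀ n, (∑ u, ∑ v, p u * p v * (f n * Q u v)) = f n * s := by
    intro n
    rw [hs_def, Finset.mul_sum]
    refine Finset.sum_congr rfl fun u _ => ?_
    rw [Finset.mul_sum]
    exact Finset.sum_congr rfl fun v _ => by ring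
  have hE : ∀ n, (∑ a : Fin n → Fin n → Bool,
      sbmProb n L p (fun i j => f n * Q i j) a * (SBMAux.eC a : ℝ))
      = (n.choose 2 : ℝ) * (f n * s) := by
    intro n
    rw [SBMAux.P_expected_edges (n := n) p _ hp1, hsig n]
  have hgoal : (fun n => entropy (sbmProb n L p (fun i j => f n * Q i j))
        / ((Nat.choose n 2 : ℝ) * f n * Real.logb 2 (1 / f n)))
      = fun n => (entropy (sbmProb n L p (fun i j => f n * Q i j)))
        / ((Nat.choose n 2 : ℝ) * f n * Real.logb 2 (1 / f n)) := rfl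
  rw [hgoal]
  -- eventual sandwich
  have hδ : (0:ℝ) < min 1 ((2*s)⁻¹) := lt_min one_pos (by positivity)
  have hev : ∀ᶠ n in Filter.atTop, f n < min 1 ((2*s)⁻¹) :=
    hfo.eventually (gt_mem_nhds hδ)
  have hev2 : ∀ᶠ n : ℕ in Filter.atTop, 2 ≤ n := Filter.eventually_ge_atTop 2
  have hbound : ∀ᶠ n in Filter.atTop,
      (s - s * Real.logb 2 Qm * (Real.logb 2 (1 / f n))⁻¹
        ≤ entropy (sbmProb n L p (fun i j => f n * Q i j))
            / ((Nat.choose n 2 : ℝ) * f n * Real.logb 2 (1 / f n)))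
      ∧ entropy (sbmProb n L p (fun i j => f n * Q i j))
            / ((Nat.choose n 2 : ℝ) * f n * Real.logb 2 (1 / f n))
          ≤ s + (s * Real.logb 2 (1/s) + 2*s/Real.log 2) * (Real.logb 2 (1 / f n))⁻¹ := by
    filter_upwards [hev, hev2] with n hfn hn2
    have hf1 : f n < 1 := lt_of_lt_of_le hfn (min_le_left _ _)
    have hfs : f n * s < 1/2 := by
      have h1 : f n < (2*s)⁻¹ := lt_of_lt_of_le hfn (min_le_right _ _)
      have := mul_lt_mul_of_pos_right h1 hs_pos
      rw [inv_mul_eq_div] at this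
      calc f n * s < s / (2 * s) := this
        _ = 1/2 := by field_simp
    have hfs_pos : 0 < f n * s := mul_pos (hf0 n) hs_pos
    have hCpos : 0 < (n.choose 2 : ℝ) := by
      exact_mod_cast Nat.choose_pos (show 2 ≤ n by omega)
    have hgpos : 0 < Real.logb 2 (1 / f n) := by
      refine Real.logb_pos one_lt_two ?_
      rw [lt_div_iff₀ (hf0 n)]
      linarith
    have hDpos : 0 < (n.choose 2 : ℝ) * f n * Real.logb 2 (1 / f n) :=
      mul_pos (mul_pos hCpos (hf0 n)) hgpos
    constructor
    · -- lower bound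
      have hlb := SBMAux.entropy_lb (n := n) p (fun i j => f n * Q i j) hp' hp1 (hW0 n) (hfW n)
        (f n * Qm) (mul_pos (hf0 n) hQm_pos) (hWM n)
      rw [hE n] at hlb
      have hlog : Real.logb 2 (1/(f n * Qm)) = Real.logb 2 (1 / f n) - Real.logb 2 Qm := by
        rw [one_div, one_div, Real.logb_inv, Real.logb_inv,
          Real.logb_mul (ne_of_gt (hf0 n)) (ne_of_gt hQm_pos)]
        ring
      rw [hlog] at hlb
      rw [le_div_iff₀ hDpos]
      calc (s - s * Real.logb 2 Qm * (Real.logb 2 (1 / f n))⁻¹)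
            * ((n.choose 2 : ℝ) * f n * Real.logb 2 (1 / f n))
          = (n.choose 2 : ℝ) * (f n * s)
              * (Real.logb 2 (1 / f n) - Real.logb 2 Qm) := by
            field_simp
        _ ≤ entropy (sbmProb n L p (fun i j => f n * Q i j)) := hlb
    · -- upper bound
      have hub := SBMAux.entropy_ub (n := n) p (fun i j => f n * Q i j) hp' hp1 (hW0 n) (hfW n)
        (f n * s) hfs_pos (by linarith)
      rw [hE n] at hub
      have h1fs : 0 < 1 - f n * s := by linarith
      have hA : Real.logb 2 (1/(f n * s)) = Real.logb 2 (1 / f n) + Real.logb 2 (1/s) := by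
        rw [one_div, one_div, one_div, Real.logb_inv, Real.logb_inv, Real.logb_inv,
          Real.logb_mul (ne_of_gt (hf0 n)) (ne_of_gt hs_pos)]
        ring
      have hB : Real.logb 2 (1/(1 - f n * s)) ≤ 2 * (f n * s) / Real.log 2 := by
        have h3 := Real.log_le_sub_one_of_pos (inv_pos.2 h1fs)
        have h4 : (1 - f n * s)⁻¹ - 1 = (f n * s)/(1 - f n * s) := by field_simp; ring
        have h5 : (f n * s)/(1 - f n * s) ≤ 2 * (f n * s) := by
          rw [div_le_iff₀ h1fs]
          nlinarith
        have h6 : Real.log ((1 - f n * s)⁻¹) ≤ 2 * (f n * s) := by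
          rw [h4] at h3
          linarith
        rw [Real.logb, one_div]
        exact (div_le_div_iff_of_pos_right (Real.log_pos one_lt_two)).2 h6
      have hBnonneg : 0 ≤ Real.logb 2 (1/(1 - f n * s)) := by
        refine Real.logb_nonneg one_lt_two ?_
        rw [le_div_iff₀ h1fs]
        linarith
      have hstep : ((n.choose 2:ℝ) - (n.choose 2:ℝ)*(f n * s))
            * Real.logb 2 (1/(1 - f n * s))
          ≤ (n.choose 2:ℝ) * (2*(f n * s)/Real.log 2) := by
        calc ((n.choose 2:ℝ) - (n.choose 2:ℝ)*(f n * s)) * Real.logb 2 (1/(1 - f n * s))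
            ≤ (n.choose 2:ℝ) * Real.logb 2 (1/(1 - f n * s)) := by
              refine mul_le_mul_of_nonneg_right ?_ hBnonneg
              nlinarith
          _ ≤ (n.choose 2:ℝ) * (2*(f n * s)/Real.log 2) :=
              mul_le_mul_of_nonneg_left hB hCpos.le
      rw [hA] at hub
      have hfinal : entropy (sbmProb n L p (fun i j => f n * Q i j))
          ≤ (n.choose 2:ℝ) * f n * (s * Real.logb 2 (1 / f n)
              + (s * Real.logb 2 (1/s) + 2*s/Real.log 2)) := by
        calc entropy (sbmProb n L p (fun i j => f n * Q i j))
            ≤ (n.choose 2:ℝ) * (f n * s)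
                * (Real.logb 2 (1 / f n) + Real.logb 2 (1/s))
              + ((n.choose 2:ℝ) - (n.choose 2:ℝ) * (f n * s))
                * Real.logb 2 (1/(1 - f n * s)) := hub
          _ ≤ (n.choose 2:ℝ) * (f n * s)
                * (Real.logb 2 (1 / f n) + Real.logb 2 (1/s))
              + (n.choose 2:ℝ) * (2*(f n * s)/Real.log 2) := add_le_add le_rfl hstep
          _ = (n.choose 2:ℝ) * f n * (s * Real.logb 2 (1 / f n)
              + (s * Real.logb 2 (1/s) + 2*s/Real.log 2)) := by
              field_simp
              ring
      rw [div_le_iff₀ hDpos]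
      calc entropy (sbmProb n L p (fun i j => f n * Q i j))
          ≤ (n.choose 2:ℝ) * f n * (s * Real.logb 2 (1 / f n)
              + (s * Real.logb 2 (1/s) + 2*s/Real.log 2)) := hfinal
        _ = (s + (s * Real.logb 2 (1/s) + 2*s/Real.log 2)
              * (Real.logb 2 (1 / f n))⁻¹)
            * ((n.choose 2:ℝ) * f n * Real.logb 2 (1 / f n)) := by
            field_simp
  -- limits
  have hg_inf : Filter.Tendsto (fun n => Real.logb 2 (1 / f n)) Filter.atTop Filter.atTop := by
    have h1 : Filter.Tendsto f Filter.atTop (nhdsWithin 0 (Set.Ioi 0)) :=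
      tendsto_nhdsWithin_of_tendsto_nhds_of_eventually_within _ hfo
        (Filter.Eventually.of_forall fun n => hf0 n)
    have h2 : Filter.Tendsto (fun n => (f n)⁻¹) Filter.atTop Filter.atTop :=
      h1.inv_tendsto_nhdsGT_zero
    have heq : (fun n => Real.logb 2 (1 / f n)) = (Real.logb 2 ∘ fun n => (f n)⁻¹) := by
      funext n; rw [Function.comp_apply, one_div]
    rw [heq]
    exact (Real.tendsto_logb_atTop one_lt_two).comp h2
  have hginv : Filter.Tendsto (fun n => (Real.logb 2 (1 / f n))⁻¹)
      Filter.atTop (nhds 0) := hg_inf.inv_tendsto_atTop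
  have hlim1 : Filter.Tendsto
      (fun n => s - s * Real.logb 2 Qm * (Real.logb 2 (1 / f n))⁻¹)
      Filter.atTop (nhds s) := by
    have h := (tendsto_const_nhds (x := s) (f := Filter.atTop)).sub
      ((tendsto_const_nhds (x := s * Real.logb 2 Qm)).mul hginv)
    simpa using h
  have hlim2 : Filter.Tendsto
      (fun n => s + (s * Real.logb 2 (1/s) + 2*s/Real.log 2)
        * (Real.logb 2 (1 / f n))⁻¹)
      Filter.atTop (nhds s) := by
    have h := (tendsto_const_nhds (x := s) (f := Filter.atTop)).add
      ((tendsto_const_nhds (x := s * Real.logb 2 (1/s) + 2*s/Real.log 2)).mul hginv)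
    simpa using h
  exact tendsto_of_tendsto_of_tendsto_of_le_of_le' hlim1 hlim2
    (hbound.mono fun n h => h.1) (hbound.mono fun n h => h.2)
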